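/- Let Z, Q, R, F_1, F_2 ∈ ℝ^{n×n} satisfy Z = QR + F_1 and QᵀQ = I + F_2 with ‖F_2‖ < 1. Then ‖R‖ ≤ ((1 + ‖F_2‖)/(1 − ‖F_2‖)) (‖Z‖ + ‖F_1‖). -/

import Mathlib

open Matrix

noncomputable def specNorm {m n : ℕ} (A : Matrix (Fin m) (Fin n) ℝ) : ℝ :=
  ‖LinearMap.toContinuousLinearMap (Matrix.toEuclideanLin A)‖

noncomputable def frobNorm {m n : ℕ} (A : Matrix (Fin m) (Fin n) ℝ) : ℝ :=
  Real.sqrt (∑ p, ∑ q, (A p q) ^ 2)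

def offDiag {n : ℕ} (A : Matrix (Fin n) (Fin n) ℝ) : Matrix (Fin n) (Fin n) ℝ :=
  fun p q => if p = q then 0 else A p q

def jacobiRot {n : ℕ} (i j : Fin n) (c s : ℝ) : Matrix (Fin n) (Fin n) ℝ :=
  fun p q =>
    if p = i ∧ q = i then c
    else if p = j ∧ q = j then c
    else if p = i ∧ q = j then s
    else if p = j ∧ q = i then -s
    else if p = q then 1 else 0

open Classical in
noncomputable def eigValsDesc {n : ℕ} (A : Matrix (Fin n) (Fin n) ℝ) : Fin n → ℝ :=
  if hA : A.IsHermitian then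
    fun k => (hA.eigenvalues ∘ Tuple.sort hA.eigenvalues) k.rev
  else 0

noncomputable def singValsDesc {m n : ℕ} (A : Matrix (Fin m) (Fin n) ℝ) : Fin n → ℝ :=
  fun k => Real.sqrt (eigValsDesc (Aᵀ * A) k)

open scoped Matrix.Norms.L2Operator in
lemma specNorm_eq_l2norm {m n : ℕ} (A : Matrix (Fin m) (Fin n) ℝ) : specNorm A = ‖A‖ := rfl

open scoped Matrix.Norms.L2Operator in
lemma R_norm_bound_aux {n : ℕ} (Z Q R F₁ F₂ : Matrix (Fin n) (Fin n) ℝ)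
    (hZ : Z = Q * R + F₁) (hQ : Qᵀ * Q = 1 + F₂) (hF₂ : ‖F₂‖ < 1) :
    ‖R‖ ≤ ((1 + ‖F₂‖) / (1 - ‖F₂‖)) * (‖Z‖ + ‖F₁‖) := by
  have hQR : Q * R = Z - F₁ := by rw [hZ]; abel
  have key : Rᵀ * R = (Q*R)ᵀ * (Q*R) - Rᵀ * F₂ * R := by
    rw [Matrix.transpose_mul]
    rw [show Rᵀ * Qᵀ * (Q * R) = Rᵀ * (Qᵀ * Q) * R by noncomm_ring]
    rw [hQ]; noncomm_ring
  have hRT : ∀ (A : Matrix (Fin n) (Fin n) ℝ), ‖Aᵀ‖ = ‖A‖ := fun A => by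
    simpa [Matrix.conjTranspose_eq_transpose_of_trivial] using Matrix.l2_opNorm_conjTranspose A
  have hRR : ∀ (A : Matrix (Fin n) (Fin n) ℝ), ‖Aᵀ * A‖ = ‖A‖ * ‖A‖ := fun A => by
    simpa [Matrix.conjTranspose_eq_transpose_of_trivial] using Matrix.l2_opNorm_conjTranspose_mul_self A
  have hQRle : ‖Q*R‖ ≤ ‖Z‖ + ‖F₁‖ := by rw [hQR]; exact norm_sub_le _ _
  have h1 : ‖R‖ * ‖R‖ ≤ (‖Z‖ + ‖F₁‖) * (‖Z‖ + ‖F₁‖) + ‖F₂‖ * (‖R‖ * ‖R‖) := by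
    calc ‖R‖ * ‖R‖ = ‖(Q*R)ᵀ * (Q*R) - Rᵀ * F₂ * R‖ := by rw [← hRR, key]
      _ ≤ ‖(Q*R)ᵀ * (Q*R)‖ + ‖Rᵀ * F₂ * R‖ := norm_sub_le _ _
      _ ≤ (‖Z‖ + ‖F₁‖) * (‖Z‖ + ‖F₁‖) + ‖F₂‖ * (‖R‖ * ‖R‖) := by
          gcongr ?_ + ?_
          · rw [hRR]
            exact mul_le_mul hQRle hQRle (norm_nonneg _) (by positivity)
          · calc ‖Rᵀ * F₂ * R‖ ≤ ‖Rᵀ * F₂‖ * ‖R‖ := norm_mul_le _ _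
              _ ≤ ‖Rᵀ‖ * ‖F₂‖ * ‖R‖ := by gcongr; exact norm_mul_le _ _
              _ = ‖F₂‖ * (‖R‖ * ‖R‖) := by rw [hRT]; ring
  have hR0 : 0 ≤ ‖R‖ := norm_nonneg _
  have hF0 : 0 ≤ ‖F₂‖ := norm_nonneg _
  have hS0 : 0 ≤ ‖Z‖ + ‖F₁‖ := by positivity
  set t := ‖F₂‖; set S := ‖Z‖ + ‖F₁‖; set r := ‖R‖
  have h2 : r * r * (1 - t) ≤ S * S := by nlinarith
  rw [div_mul_eq_mul_div, le_div_iff₀ (by linarith)]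
  by_contra hc
  push_neg at hc
  have hc2 : ((1+t)*S)*((1+t)*S) < (r*(1-t))*(r*(1-t)) :=
    mul_self_lt_mul_self (by positivity) hc
  nlinarith [mul_le_mul_of_nonneg_right h2 (by linarith : (0:ℝ) ≤ 1 - t),
    mul_nonneg (mul_nonneg hS0 hS0) hF0, sq_nonneg t, mul_nonneg (mul_nonneg (mul_nonneg hS0 hS0) hF0) hF0]

/-- Bound on `‖R‖` for an approximate QR factorization. -/
theorem R_norm_bound {n : ℕ} (Z Q R F₁ F₂ : Matrix (Fin n) (Fin n) ℝ)
    (hZ : Z = Q * R + F₁) (hQ : Qᵀ * Q = 1 + F₂) (hF₂ : specNorm F₂ < 1) :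
    specNorm R ≤ ((1 + specNorm F₂) / (1 - specNorm F₂)) * (specNorm Z + specNorm F₁) := by
  simp only [specNorm_eq_l2norm] at *
  exact R_norm_bound_aux Z Q R F₁ F₂ hZ hQ hF₂
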